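/- arXiv:2408.01974 — 2 statements merged into one kernel-verified Lean document; each statement's English description precedes it below -/
import Mathlib

section
/- Let G be a finite soluble CPPO-group. Then the number of prime divisors of |G'| is at most the Fitting height of G. -/
/-- Relative lower central series of `K` over `N`. -/
def relLCS {G : Type*} [Group G] (N K : Subgroup G) : ℕ → Subgroup G
  | 0 => K
  | (m + 1) => ⁅relLCS N K m, K⁆ ⊔ N

/-- The Fitting height: the least length of a normal series with nilpotent factors. -/
noncomputable def fittingHeight (G : Type*) [Group G] : ℕ :=
  sInf {n : ℕ | ∃ H : ℕ → Subgroup G, H 0 = ⊥ ∧ H n = ⊤ ∧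
    (∀ i, (H i).Normal) ∧ (∀ i, H i ≤ H (i + 1)) ∧
    ∀ i < n, ∃ m, relLCS (H i) (H (i + 1)) m ≤ H i}

open scoped commutatorElement

section CPPOAux

universe u

/-- The CPPO condition. -/
def IsCPPO (G : Type*) [Group G] : Prop :=
  ∀ x y : G, orderOf ⁅x, y⁆ = 1 ∨ IsPrimePow (orderOf ⁅x, y⁆)

variable {G : Type*} [Group G]

lemma isCPPO_of_surjective {G' : Type*} [Group G'] (f : G →* G')
    (hf : Function.Surjective f) (h : IsCPPO G) : IsCPPO G' := by
  intro x y
  obtain ⟨a, rfl⟩ := hf x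
  obtain ⟨b, rfl⟩ := hf y
  have hdvd : orderOf (f ⁅a, b⁆) ∣ orderOf ⁅a, b⁆ := orderOf_map_dvd f _
  rw [map_commutatorElement] at hdvd
  rcases h a b with h1 | ⟨p, k, hp, hk, hpk⟩
  · left; simpa [h1, Nat.dvd_one] using hdvd
  · rw [← hpk] at hdvd
    obtain ⟨j, hj, hje⟩ := (Nat.dvd_prime_pow hp.nat_prime).mp hdvd
    rcases Nat.eq_zero_or_pos j with rfl | hjpos
    · left; simpa using hje
    · right; exact ⟨p, j, hp, hjpos, hje.symm⟩

lemma relLCS_mono_left (N N' K : Subgroup G) (h : N ≤ N') :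
    ∀ m, relLCS N K m ≤ relLCS N' K m := by
  intro m
  induction m with
  | zero => exact le_rfl
  | succ m ih =>
    exact sup_le_sup (Subgroup.commutator_mono ih le_rfl) h

lemma relLCS_map {G' : Type*} [Group G'] (f : G →* G') (N K : Subgroup G) :
    ∀ m, (relLCS N K m).map f = relLCS (N.map f) (K.map f) m := by
  intro m
  induction m with
  | zero => rfl
  | succ m ih =>
    show ((⁅relLCS N K m, K⁆ : Subgroup G) ⊔ N).map f = _
    rw [Subgroup.map_sup, Subgroup.map_commutator, ih]
    rfl

lemma isNilpotent_of_relLCS (N : Subgroup G) (m : ℕ) (h : relLCS ⊥ N m ≤ ⊥) :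
    Group.IsNilpotent ↥N := by
  have key : ∀ k, (lowerCentralSeries (⊤ : Subgroup ↥N) k).map N.subtype ≤ relLCS ⊥ N k := by
    intro k
    induction k with
    | zero =>
      show (⊤ : Subgroup ↥N).map N.subtype ≤ N
      rw [← MonoidHom.range_eq_map, N.range_subtype]
    | succ k ih =>
      show (⁅lowerCentralSeries (⊤ : Subgroup ↥N) k, ⊤⁆ : Subgroup ↥N).map N.subtype ≤ ⁅relLCS ⊥ N k, N⁆ ⊔ ⊥
      rw [Subgroup.map_commutator]
      refine le_sup_of_le_left (Subgroup.commutator_mono ih ?_)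
      rw [← MonoidHom.range_eq_map, N.range_subtype]
  have hbot : (lowerCentralSeries (⊤ : Subgroup ↥N) m).map N.subtype = ⊥ :=
    le_bot_iff.mp ((key m).trans h)
  rw [Subgroup.map_eq_bot_iff_of_injective _ N.subtype_injective] at hbot
  exact nilpotent_iff_lowerCentralSeries.mpr ⟨m, hbot⟩

variable [Finite G]

/-- The commuting hypothesis we extract from nilpotency of `N`. -/
def CommHyp (N : Subgroup G) : Prop :=
  ∀ a b : G, a ∈ N → b ∈ N → ∀ {p q k l : ℕ}, p.Prime → q.Prime → p ≠ q →
    orderOf a = p ^ k → orderOf b = q ^ l → Commute a b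

/-- Two nontrivial commutators whose product is a commutator cannot have orders that are
powers of distinct primes. -/
lemma clash (hcppo : IsCPPO G) {N : Subgroup G}
    (hcomm : CommHyp N)
    {p q : ℕ} (hp : p.Prime) (hq : q.Prime) (hpq : p ≠ q)
    {e₁ e₂ w z : G} (h₁ : e₁ ∈ N) (h₂ : e₂ ∈ N)
    {a b : ℕ} (ha : 0 < a) (hb : 0 < b)
    (ho₁ : orderOf e₁ = p ^ a) (ho₂ : orderOf e₂ = q ^ b)
    (heq : e₁ * e₂ = ⁅w, z⁆) : False := by
  have hcop : (orderOf e₁).Coprime (orderOf e₂) := by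
    rw [ho₁, ho₂]
    exact Nat.Coprime.pow _ _ ((Nat.coprime_primes hp hq).mpr hpq)
  have hco : Commute e₁ e₂ := hcomm e₁ e₂ h₁ h₂ hp hq hpq ho₁ ho₂
  have hord : orderOf (e₁ * e₂) = p ^ a * q ^ b := by
    rw [hco.orderOf_mul_eq_mul_orderOf_of_coprime hcop, ho₁, ho₂]
  rw [heq] at hord
  rcases hcppo w z with h1 | ⟨r, k, hr, hk, hrk⟩
  · rw [h1] at hord
    have : p ∣ 1 := by
      rw [hord]; exact Dvd.dvd.mul_right (dvd_pow_self p ha.ne') _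
    exact hp.one_lt.ne' (Nat.dvd_one.mp this)
  · rw [hord] at hrk
    have hpr : p = r := by
      have hdvd : p ∣ r ^ k := by
        rw [hrk]; exact Dvd.dvd.mul_right (dvd_pow_self p ha.ne') _
      exact (Nat.prime_dvd_prime_iff_eq hp hr.nat_prime).mp (hp.dvd_of_dvd_pow hdvd)
    have hqr : q = r := by
      have hdvd : q ∣ r ^ k := by
        rw [hrk]; exact Dvd.dvd.mul_left (dvd_pow_self q hb.ne') _
      exact (Nat.prime_dvd_prime_iff_eq hq hr.nat_prime).mp (hq.dvd_of_dvd_pow hdvd)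
    exact hpq (hpr.trans hqr.symm)

omit [Finite G] in
lemma commutator_mem_right {N : Subgroup G} [N.Normal] (g x : G) (hx : x ∈ N) :
    ⁅g, x⁆ ∈ N :=
  Subgroup.commutator_le_right ⊤ N (Subgroup.commutator_mem_commutator (Subgroup.mem_top g) hx)

omit [Finite G] in
lemma orderOf_conj (g x : G) : orderOf (g * x * g⁻¹) = orderOf x :=
  orderOf_injective (MulAut.conj g).toMonoidHom (MulAut.conj g).injective x

lemma combine (hcppo : IsCPPO G) {N : Subgroup G} [N.Normal]
    (hcomm : CommHyp N)
    {p q : ℕ} (hp : p.Prime) (hq : q.Prime) (hpq : p ≠ q)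
    {k u v : G} (hu : u ∈ N) (hv : v ∈ N)
    {a b : ℕ} (ha : 0 < a) (hb : 0 < b)
    (h1 : orderOf ⁅k, u⁆ = p ^ a) (h2 : orderOf ⁅k, v⁆ = q ^ b) : False := by
  refine clash hcppo hcomm hp hq hpq (commutator_mem_right k u hu)
    (N.mul_mem (N.mul_mem hu (commutator_mem_right k v hv)) (N.inv_mem hu)) ha hb h1
    ((orderOf_conj u ⁅k, v⁆).trans h2) (w := k) (z := u * v) ?_
  group

lemma step_clash (hcppo : IsCPPO G) {N : Subgroup G} [N.Normal]
    (hcomm : CommHyp N)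
    {g h x : G} (hx : x ∈ N)
    {p q a b : ℕ} (hp : p.Prime) (hq : q.Prime) (hqp : q ≠ p)
    (ha : 0 < a) (hb : 0 < b)
    (hhx : orderOf ⁅h, x⁆ = q ^ b) (hgx : orderOf ⁅g, x⁆ = p ^ a) : False := by
  have hmem : g * ⁅h, x⁆ * g⁻¹ ∈ N :=
    (by infer_instance : N.Normal).conj_mem _ (commutator_mem_right h x hx) g
  refine clash hcppo hcomm hq hp hqp hmem (commutator_mem_right g x hx) hb ha
    ((orderOf_conj g ⁅h, x⁆).trans hhx) hgx (w := g * h) (z := x) ?_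
  group

lemma pairwise_prime (hcppo : IsCPPO G) {N : Subgroup G} [N.Normal]
    (hcomm : CommHyp N)
    {g h x y : G} (hx : x ∈ N) (hy : y ∈ N)
    {p q a b : ℕ} (hp : p.Prime) (hq : q.Prime) (ha : 0 < a) (hb : 0 < b)
    (h1 : orderOf ⁅g, x⁆ = p ^ a) (h2 : orderOf ⁅h, y⁆ = q ^ b) : p = q := by
  by_contra hpq
  have hβ : ⁅h, x⁆ = 1 := by
    rcases hcppo h x with h0 | ⟨r, s, hr, hs, hrs⟩
    · exact orderOf_eq_one_iff.mp h0
    · exfalso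
      by_cases hrq : r = q
      · exact step_clash hcppo hcomm hx hp hq (Ne.symm hpq) ha hs
          (by rw [← hrs, hrq]) h1
      · exact combine hcppo hcomm hr.nat_prime hq hrq hx hy hs hb hrs.symm h2 (k := h)
  have hα : ⁅g, y⁆ = 1 := by
    rcases hcppo g y with h0 | ⟨r, s, hr, hs, hrs⟩
    · exact orderOf_eq_one_iff.mp h0
    · exfalso
      by_cases hrp : r = p
      · exact step_clash hcppo hcomm hy hr.nat_prime hq (fun e => hpq (hrp ▸ e.symm)) hs hb
          h2 hrs.symm (g := g) (h := h)
      · exact combine hcppo hcomm hp hr.nat_prime (fun e => hrp e.symm) hx hy ha hs h1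
          hrs.symm (k := g)
  have e1 : ⁅g * h, x⁆ = ⁅g, x⁆ := by
    have e : ⁅g * h, x⁆ = g * ⁅h, x⁆ * g⁻¹ * ⁅g, x⁆ := by group
    rw [hβ] at e; simpa using e
  have e2 : ⁅g * h, y⁆ = g * ⁅h, y⁆ * g⁻¹ := by
    have e : ⁅g * h, y⁆ = g * ⁅h, y⁆ * g⁻¹ * ⁅g, y⁆ := by group
    rw [hα] at e; simpa using e
  exact combine hcppo hcomm hp hq hpq hx hy ha hb (by rw [e1, h1])
    (by rw [e2, orderOf_conj, h2]) (k := g * h)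


lemma mem_sylow_of_orderOf {H : Type*} [Group H] [Finite H] {p : ℕ} [Fact p.Prime]
    (P : Sylow p H) (hPn : (↑P : Subgroup H).Normal) {x : H} {k : ℕ} (ho : orderOf x = p ^ k) :
    x ∈ (↑P : Subgroup H) := by
  haveI := Sylow.unique_of_normal P hPn
  have hpg : IsPGroup p (Subgroup.zpowers x) :=
    IsPGroup.of_card (by rw [Nat.card_zpowers, ho])
  obtain ⟨Q, hQ⟩ := hpg.exists_le_sylow
  have hQP : Q = P := Subsingleton.elim Q P
  exact hQP ▸ hQ (Subgroup.mem_zpowers x)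

lemma lemA (hcppo : IsCPPO G) (N : Subgroup G) [N.Normal]
    (hnil : Group.IsNilpotent ↥N) :
    (Nat.card (↥⁅(⊤ : Subgroup G), N⁆)).primeFactors.card ≤ 1 := by
  have hsyl : ∀ (p : ℕ) (_ : Fact p.Prime) (P : Sylow p ↥N), (↑P : Subgroup ↥N).Normal :=
    ((isNilpotent_of_finite_tfae (G := ↥N)).out 0 3).mp hnil
  have horder : ∀ (a : G) (ha : a ∈ N), orderOf (⟨a, ha⟩ : ↥N) = orderOf a :=
    fun a ha => (orderOf_injective N.subtype N.subtype_injective ⟨a, ha⟩).symm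
  have hcomm : CommHyp N := by
    intro a b ha hb p q k l hp hq hpq hoa hob
    haveI := Fact.mk hp; haveI := Fact.mk hq
    obtain ⟨P⟩ : Nonempty (Sylow p ↥N) := inferInstance
    obtain ⟨Q⟩ : Nonempty (Sylow q ↥N) := inferInstance
    have h1 : (⟨a, ha⟩ : ↥N) ∈ (↑P : Subgroup ↥N) :=
      mem_sylow_of_orderOf P (hsyl p ⟨hp⟩ P) ((horder a ha).trans hoa)
    have h2 : (⟨b, hb⟩ : ↥N) ∈ (↑Q : Subgroup ↥N) :=
      mem_sylow_of_orderOf Q (hsyl q ⟨hq⟩ Q) ((horder b hb).trans hob)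
    have hd : Disjoint (↑P : Subgroup ↥N) ↑Q :=
      IsPGroup.disjoint_of_ne p q hpq _ _ P.isPGroup' Q.isPGroup'
    have hc := Subgroup.commute_of_normal_of_disjoint _ _ (hsyl p ⟨hp⟩ P) (hsyl q ⟨hq⟩ Q)
      hd _ _ h1 h2
    exact Subtype.ext_iff.mp hc
  classical
  by_cases hex : ∃ g : G, ∃ x : G, x ∈ N ∧ ⁅g, x⁆ ≠ (1 : G)
  · obtain ⟨g₀, x₀, hx₀, hne₀⟩ := hex
    rcases hcppo g₀ x₀ with h0 | ⟨p, a, hp, ha, hpa⟩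
    · exact absurd (orderOf_eq_one_iff.mp h0) hne₀
    haveI := Fact.mk hp.nat_prime
    obtain ⟨P⟩ : Nonempty (Sylow p ↥N) := inferInstance
    have hPn := hsyl p ⟨hp.nat_prime⟩ P
    have hle : ⁅(⊤ : Subgroup G), N⁆ ≤ ((↑P : Subgroup ↥N)).map N.subtype := by
      rw [Subgroup.commutator_le]
      intro g _ x hx
      rcases hcppo g x with h0 | ⟨q, b, hq, hb, hqb⟩
      · rw [orderOf_eq_one_iff.mp h0]; exact Subgroup.one_mem _
      · have hqp : q = p := pairwise_prime hcppo hcomm hx hx₀ hq.nat_prime hp.nat_prime hb ha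
          hqb.symm hpa.symm (g := g) (h := g₀)
        have hmem : ⁅g, x⁆ ∈ N := commutator_mem_right g x hx
        have ho' : orderOf (⟨⁅g, x⁆, hmem⟩ : ↥N) = p ^ b := by
          rw [horder _ hmem, ← hqb, hqp]
        exact ⟨_, mem_sylow_of_orderOf P hPn ho', rfl⟩
    obtain ⟨m, hm⟩ := P.isPGroup'.exists_card_eq
    have hdvd : Nat.card ↥⁅(⊤ : Subgroup G), N⁆ ∣ p ^ m := by
      have h1 := Subgroup.card_dvd_of_le hle
      have h2 : Nat.card ↥(((↑P : Subgroup ↥N)).map N.subtype) = p ^ m := by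
        rw [← Nat.card_congr
          (Subgroup.equivMapOfInjective (↑P : Subgroup ↥N) N.subtype N.subtype_injective).toEquiv,
          hm]
      rwa [h2] at h1
    obtain ⟨j, hj, hje⟩ := (Nat.dvd_prime_pow hp.nat_prime).mp hdvd
    rw [hje]
    rcases Nat.eq_zero_or_pos j with rfl | hjpos
    · simp
    · rw [Nat.primeFactors_prime_pow hjpos.ne' hp.nat_prime]
      simp
  · push_neg at hex
    have hbot : ⁅(⊤ : Subgroup G), N⁆ = ⊥ := by
      rw [eq_bot_iff, Subgroup.commutator_le]
      intro g _ x hx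
      simpa using hex g x hx
    rw [hbot]
    simp

lemma key (n : ℕ) : ∀ (G : Type u) [Group G] [Finite G], IsCPPO G →
    (∃ H : ℕ → Subgroup G, H 0 = ⊥ ∧ H n = ⊤ ∧ (∀ i, (H i).Normal) ∧ (∀ i, H i ≤ H (i + 1)) ∧
      ∀ i < n, ∃ m, relLCS (H i) (H (i + 1)) m ≤ H i) →
    (Nat.card (commutator G)).primeFactors.card ≤ n := by
  induction n with
  | zero =>
    rintro G _ _ _ ⟨H, h0, htop, -, -, -⟩
    have hbt : (⊥ : Subgroup G) = ⊤ := h0 ▸ htop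
    have hc : commutator G = ⊥ := le_bot_iff.mp (hbt ▸ le_top)
    rw [hc]
    simp
  | succ n ih =>
    rintro G _ _ hcppo ⟨H, h0, htop, hnorm, hmono, hrel⟩
    haveI hN : (H 1).Normal := hnorm 1
    have hnil : Group.IsNilpotent ↥(H 1) := by
      obtain ⟨m, hm⟩ := hrel 0 (Nat.succ_pos n)
      rw [h0] at hm
      exact isNilpotent_of_relLCS (H 1) m hm
    haveI hMnorm : (⁅(⊤ : Subgroup G), H 1⁆ : Subgroup G).Normal :=
      Subgroup.commutator_normal ⊤ (H 1)
    have hMle : (⁅(⊤ : Subgroup G), H 1⁆ : Subgroup G) ≤ commutator G :=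
      (Subgroup.commutator_mono le_top le_top).trans_eq (commutator_def G).symm
    have hMcard : (Nat.card (↥⁅(⊤ : Subgroup G), H 1⁆)).primeFactors.card ≤ 1 :=
      lemA hcppo (H 1) hnil
    rcases Nat.eq_zero_or_pos n with rfl | hn
    · have hNtop : H 1 = ⊤ := htop
      have hMc : (⁅(⊤ : Subgroup G), H 1⁆ : Subgroup G) = commutator G := by
        rw [hNtop, commutator_def]
      rw [← hMc]
      exact hMcard
    · set M : Subgroup G := ⁅(⊤ : Subgroup G), H 1⁆ with hMdef
      set π : G →* G ⧸ M := QuotientGroup.mk' M with hπdef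
      have hπ : Function.Surjective π := QuotientGroup.mk'_surjective M
      have hQcppo : IsCPPO (G ⧸ M) := isCPPO_of_surjective π hπ hcppo
      have hNcentral : (H 1).map π ≤ Subgroup.center (G ⧸ M) := by
        rintro q ⟨x, hx, rfl⟩
        rw [Subgroup.mem_center_iff]
        intro z
        obtain ⟨g, rfl⟩ := hπ z
        have hmm : ⁅g⁻¹, x⁻¹⁆ ∈ M :=
          Subgroup.commutator_mem_commutator (Subgroup.mem_top g⁻¹) ((H 1).inv_mem hx)
        rw [← map_mul, ← map_mul]
        show QuotientGroup.mk (g * x) = QuotientGroup.mk (x * g)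
        rw [QuotientGroup.eq]
        convert M.inv_mem hmm using 1
        group
      set K : ℕ → Subgroup (G ⧸ M) :=
        fun i => Nat.casesOn i ⊥ (fun j => (H (j + 2)).map π) with hKdef
      have hKser : K 0 = ⊥ ∧ K n = ⊤ ∧ (∀ i, (K i).Normal) ∧ (∀ i, K i ≤ K (i + 1)) ∧
          ∀ i < n, ∃ m, relLCS (K i) (K (i + 1)) m ≤ K i := by
        obtain ⟨n', rfl⟩ := Nat.exists_eq_succ_of_ne_zero hn.ne'
        refine ⟨rfl, ?_, ?_, ?_, ?_⟩
        · show (H (n' + 2)).map π = ⊤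
          rw [htop]
          exact Subgroup.map_top_of_surjective π hπ
        · intro i
          cases i with
          | zero => show (⊥ : Subgroup (G ⧸ M)).Normal; infer_instance
          | succ j => exact (hnorm (j + 2)).map π hπ
        · intro i
          cases i with
          | zero => exact bot_le
          | succ j => exact Subgroup.map_mono (hmono (j + 2))
        · intro i hi
          cases i with
          | zero =>
            obtain ⟨m, hm⟩ := hrel 1 (by omega)
            refine ⟨m + 1, ?_⟩
            have h1 : relLCS ((H 1).map π) ((H 2).map π) m ≤ (H 1).map π := by
              rw [← relLCS_map]
              exact Subgroup.map_mono hm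
            have h2 : relLCS ⊥ (K 1) m ≤ Subgroup.center (G ⧸ M) :=
              ((relLCS_mono_left ⊥ ((H 1).map π) (K 1) bot_le m).trans h1).trans hNcentral
            show (⁅relLCS ⊥ (K 1) m, K 1⁆ : Subgroup (G ⧸ M)) ⊔ ⊥ ≤ ⊥
            refine sup_le ?_ le_rfl
            rw [Subgroup.commutator_le]
            intro a hA b hB
            rw [Subgroup.mem_bot, commutatorElement_eq_one_iff_commute]
            exact (Subgroup.mem_center_iff.mp (h2 hA) b).symm
          | succ j =>
            obtain ⟨m, hm⟩ := hrel (j + 2) (by omega)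
            refine ⟨m, ?_⟩
            show relLCS ((H (j + 2)).map π) ((H (j + 3)).map π) m ≤ (H (j + 2)).map π
            rw [← relLCS_map]
            exact Subgroup.map_mono hm
      have hQ := ih (G ⧸ M) hQcppo ⟨K, hKser⟩
      have hcount : Nat.card (commutator G) =
          Nat.card (commutator (G ⧸ M)) * Nat.card ↥M := by
        have h1 := Subgroup.card_eq_card_quotient_mul_card_subgroup
          (M.subgroupOf (commutator G))
        have h2 : Nat.card ↥(M.subgroupOf (commutator G)) = Nat.card ↥M :=
          Nat.card_congr (Subgroup.subgroupOfEquivOfLe hMle).toEquiv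
        have h3 : Nat.card (↥(commutator G) ⧸ M.subgroupOf (commutator G)) =
            Nat.card (commutator (G ⧸ M)) := by
          set f : ↥(commutator G) →* G ⧸ M := π.comp (commutator G).subtype with hfdef
          have hker : f.ker = M.subgroupOf (commutator G) := by
            rw [hfdef, ← MonoidHom.comap_ker]
            have : π.ker = M := QuotientGroup.ker_mk' M
            rw [this]
            rfl
          have hrange : f.range = commutator (G ⧸ M) := by
            rw [hfdef, MonoidHom.range_comp, Subgroup.range_subtype,
              commutator_def, commutator_def, Subgroup.map_commutator,
              Subgroup.map_top_of_surjective π hπ]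
          rw [← hker]
          exact hrange ▸ Nat.card_congr (QuotientGroup.quotientKerEquivRange f).toEquiv
        rw [h1, h2, h3]
      have hMpos : Nat.card ↥M ≠ 0 := Nat.card_pos.ne'
      have hQpos : Nat.card (commutator (G ⧸ M)) ≠ 0 := Nat.card_pos.ne'
      rw [hcount, Nat.primeFactors_mul hQpos hMpos]
      exact (Finset.card_union_le _ _).trans (Nat.add_le_add hQ hMcard)

end CPPOAux

theorem cppo_primes_of_commutator_le_fitting_height
    (G : Type*) [Group G] [Finite G] (hsol : IsSolvable G)
    (hcppo : ∀ x y : G, orderOf ⁅x, y⁆ = 1 ∨ IsPrimePow (orderOf ⁅x, y⁆)) :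
    (Nat.card (commutator G)).primeFactors.card ≤ fittingHeight G := by
  obtain ⟨n, hn⟩ := hsol.solvable
  have hstep : ∀ k, derivedSeries G (k + 1) ≤ derivedSeries G k := by
    intro k
    haveI := derivedSeries_normal G k
    rw [derivedSeries_succ]
    exact Subgroup.commutator_le_left _ _
  have hanti : Antitone (derivedSeries G) := antitone_nat_of_succ_le hstep
  have hwit : ∃ H : ℕ → Subgroup G, H 0 = ⊥ ∧ H n = ⊤ ∧
      (∀ i, (H i).Normal) ∧ (∀ i, H i ≤ H (i + 1)) ∧
      ∀ i < n, ∃ m, relLCS (H i) (H (i + 1)) m ≤ H i := by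
    refine ⟨fun i => derivedSeries G (n - i), by simpa using hn, by simp,
      fun i => derivedSeries_normal G _, fun i => hanti (by omega), fun i hi => ⟨1, ?_⟩⟩
    show (⁅derivedSeries G (n - (i + 1)), derivedSeries G (n - (i + 1))⁆ : Subgroup G) ⊔
        derivedSeries G (n - i) ≤ derivedSeries G (n - i)
    have he : n - i = (n - (i + 1)) + 1 := by omega
    rw [he, derivedSeries_succ]
    exact sup_le le_rfl le_rfl
  have hmem : fittingHeight G ∈ {n : ℕ | ∃ H : ℕ → Subgroup G, H 0 = ⊥ ∧ H n = ⊤ ∧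
      (∀ i, (H i).Normal) ∧ (∀ i, H i ≤ H (i + 1)) ∧
      ∀ i < n, ∃ m, relLCS (H i) (H (i + 1)) m ≤ H i} := Nat.sInf_mem ⟨n, hwit⟩
  exact key (fittingHeight G) G hcppo hmem
end

section
/- Let G be a finite soluble group with γ_∞(G) abelian, and T a system normalizer of G. Then T ∩ γ_∞(G) = 1. -/
open Pointwise
open scoped commutatorElement

/-- A Sylow basis: pairwise permutable Sylow `p`-subgroups, one for each prime
dividing the order of the group. -/
def IsSylowBasis {G : Type*} [Group G] (S : ℕ → Subgroup G) : Prop :=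
  (∀ p ∈ (Nat.card G).primeFactors,
      IsPGroup p (S p) ∧ ∀ Q : Subgroup G, IsPGroup p Q → S p ≤ Q → Q = S p) ∧
  (∀ p ∈ (Nat.card G).primeFactors, ∀ q ∈ (Nat.card G).primeFactors,
      (S p : Set G) * (S q : Set G) = (S q : Set G) * (S p : Set G))

/-- The system normalizer of a Sylow basis. -/
def systemNormalizer {G : Type*} [Group G] (S : ℕ → Subgroup G) : Subgroup G :=
  ⨅ p ∈ (Nat.card G).primeFactors, Subgroup.normalizer (S p : Set G)

namespace SysNormAux

variable {G : Type*} [Group G]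

lemma conj_pow_eq (c g : G) (n : ℕ) : (c * g * c⁻¹) ^ n = c * g ^ n * c⁻¹ := by
  induction n with
  | zero => simp
  | succ n ih => rw [pow_succ, pow_succ, ih]; group

/-- product of two subgroups whose carriers permute is the carrier of the join -/
lemma sup_carrier_eq_mul {A B : Subgroup G} (h : (A : Set G) * B = (B : Set G) * A) :
    ((A ⊔ B : Subgroup G) : Set G) = (A : Set G) * B := by
  have hK : ∃ K : Subgroup G, (K : Set G) = (A : Set G) * B := by
    refine ⟨{ carrier := (A : Set G) * B
              one_mem' := ⟨1, A.one_mem, 1, B.one_mem, one_mul 1⟩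
              mul_mem' := ?_
              inv_mem' := ?_ }, rfl⟩
    · rintro x y ⟨a, ha, b, hb, rfl⟩ ⟨a2, ha2, b2, hb2, rfl⟩
      have hba : (b : G) * a2 ∈ (A : Set G) * B := by
        rw [h]; exact ⟨b, hb, a2, ha2, rfl⟩
      obtain ⟨a3, ha3, b3, hb3, he⟩ := hba
      refine ⟨a * a3, A.mul_mem ha ha3, b3 * b2, B.mul_mem hb3 hb2, ?_⟩
      have he' : a3 * b3 = b * a2 := he
      show a * a3 * (b3 * b2) = a * b * (a2 * b2)
      rw [mul_assoc a a3, ← mul_assoc a3 b3 b2, he', mul_assoc b a2 b2,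
        ← mul_assoc a b (a2 * b2)]
    · rintro x ⟨a, ha, b, hb, rfl⟩
      have : (b : G)⁻¹ * a⁻¹ ∈ (A : Set G) * B := by
        rw [h]; exact ⟨b⁻¹, B.inv_mem hb, a⁻¹, A.inv_mem ha, rfl⟩
      obtain ⟨a3, ha3, b3, hb3, he⟩ := this
      exact ⟨a3, ha3, b3, hb3, by rw [mul_inv_rev]; exact he⟩
  obtain ⟨K, hKcoe⟩ := hK
  have h1 : A ⊔ B ≤ K := by
    refine sup_le (fun a ha => ?_) (fun b hb => ?_)
    · rw [← SetLike.mem_coe, hKcoe]; exact ⟨a, ha, 1, B.one_mem, mul_one a⟩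
    · rw [← SetLike.mem_coe, hKcoe]; exact ⟨1, A.one_mem, b, hb, one_mul b⟩
  have h2 : K ≤ A ⊔ B := by
    intro x hx
    rw [← SetLike.mem_coe, hKcoe] at hx
    obtain ⟨a, ha, b, hb, rfl⟩ := hx
    exact mul_mem ((le_sup_left : A ≤ A ⊔ B) ha) ((le_sup_right : B ≤ A ⊔ B) hb)
  rw [le_antisymm h1 h2, hKcoe]

lemma sup_carrier_eq_mul_of_commute {A B : Subgroup G}
    (h : ∀ a ∈ A, ∀ b ∈ B, Commute a b) :
    ((A ⊔ B : Subgroup G) : Set G) = (A : Set G) * B := by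
  apply sup_carrier_eq_mul
  ext x
  simp only [Set.mem_mul]
  constructor
  · rintro ⟨a, ha, b, hb, rfl⟩
    exact ⟨b, hb, a, ha, ((h a ha b hb).eq).symm⟩
  · rintro ⟨b, hb, a, ha, rfl⟩
    exact ⟨a, ha, b, hb, (h a ha b hb).eq⟩

lemma card_sup_of_mul_comm [Finite G] {A B : Subgroup G}
    (h : (A : Set G) * B = (B : Set G) * A) (hd : A ⊓ B = ⊥) :
    Nat.card ↥(A ⊔ B) = Nat.card A * Nat.card B := by
  have hco := sup_carrier_eq_mul h
  have hbij : Function.Bijective (fun ab : ↥A × ↥B =>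
      (⟨(ab.1 : G) * ab.2, mul_mem ((le_sup_left : A ≤ A ⊔ B) ab.1.2)
        ((le_sup_right : B ≤ A ⊔ B) ab.2.2)⟩ : ↥(A ⊔ B))) := by
    constructor
    · rintro ⟨⟨a1, ha1⟩, ⟨b1, hb1⟩⟩ ⟨⟨a2, ha2⟩, ⟨b2, hb2⟩⟩ he
      have he' : a1 * b1 = a2 * b2 := congrArg Subtype.val he
      have key : a2⁻¹ * a1 = b2 * b1⁻¹ := by
        rw [eq_mul_inv_iff_mul_eq, mul_assoc, he', inv_mul_cancel_left]
      have hmem : a2⁻¹ * a1 ∈ A ⊓ B := by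
        refine ⟨A.mul_mem (A.inv_mem ha2) ha1, ?_⟩
        rw [key]; exact B.mul_mem hb2 (B.inv_mem hb1)
      rw [hd] at hmem
      have h1 : a2⁻¹ * a1 = 1 := (Subgroup.mem_bot).mp hmem
      have ha : a1 = a2 := (inv_mul_eq_one.mp h1).symm
      have hb : b1 = b2 := (mul_inv_eq_one.mp (key.symm.trans h1)).symm
      exact Prod.ext (Subtype.ext ha) (Subtype.ext hb)
    · rintro ⟨x, hx⟩
      rw [← SetLike.mem_coe, hco] at hx
      obtain ⟨a, ha, b, hb, he⟩ := hx
      exact ⟨⟨⟨a, ha⟩, ⟨b, hb⟩⟩, Subtype.ext he⟩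
  rw [← Nat.card_eq_of_bijective _ hbij, Nat.card_prod]

lemma card_sup_dvd_of_normal [Finite G] (A N : Subgroup G) [N.Normal] :
    Nat.card ↥(A ⊔ N) ∣ Nat.card A * Nat.card N := by
  have e := QuotientGroup.quotientInfEquivProdNormalQuotient A N
  have h1 := Subgroup.card_eq_card_quotient_mul_card_subgroup (N.subgroupOf (A ⊔ N))
  have h2 : Nat.card ↥(N.subgroupOf (A ⊔ N)) = Nat.card N :=
    Nat.card_congr (Subgroup.subgroupOfEquivOfLe le_sup_right).toEquiv
  have h3 : Nat.card (↥A ⧸ N.subgroupOf A) ∣ Nat.card A :=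
    ⟨_, Subgroup.card_eq_card_quotient_mul_card_subgroup (N.subgroupOf A)⟩
  rw [h1, h2]
  exact mul_dvd_mul_right (by rw [← Nat.card_congr e.toEquiv]; exact h3) _

lemma eq_of_le_of_card_le [Finite G] {A B : Subgroup G} (h : A ≤ B)
    (hc : Nat.card B ≤ Nat.card A) : A = B := by
  apply SetLike.coe_injective
  apply Set.eq_of_subset_of_ncard_le h
  rwa [← Nat.card_coe_set_eq, ← Nat.card_coe_set_eq]

lemma prod_pow_dvd (F : Finset ℕ) (hprime : ∀ q ∈ F, q.Prime) (e : ℕ → ℕ) (k : ℕ)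
    (h : ∀ q ∈ F, q ^ e q ∣ k) : (∏ q ∈ F, q ^ e q) ∣ k := by
  classical
  induction F using Finset.induction_on with
  | empty => simpa using one_dvd k
  | @insert a F ha ih =>
    rw [Finset.prod_insert ha]
    have hcop : Nat.Coprime (a ^ e a) (∏ q ∈ F, q ^ e q) := by
      apply Nat.Coprime.pow_left
      apply Nat.Coprime.prod_right
      intro q hq
      exact Nat.Coprime.pow_right _ ((Nat.coprime_primes (hprime a (Finset.mem_insert_self a F))
        (hprime q (Finset.mem_insert_of_mem hq))).mpr (by rintro rfl; exact ha hq))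
    exact hcop.mul_dvd_of_dvd_of_dvd (h a (Finset.mem_insert_self a F))
      (ih (fun q hq => hprime q (Finset.mem_insert_of_mem hq))
          (fun q hq => h q (Finset.mem_insert_of_mem hq)))

lemma exists_lcs_stab (G : Type*) [Group G] [Finite G] :
    ∃ n : ℕ, Subgroup.lowerCentralSeries (⊤ : Subgroup G) n = (⨅ i, Subgroup.lowerCentralSeries (⊤ : Subgroup G) i) ∧
      ⁅(⨅ i, Subgroup.lowerCentralSeries (⊤ : Subgroup G) i : Subgroup G), (⊤ : Subgroup G)⁆ =
        ⨅ i, Subgroup.lowerCentralSeries (⊤ : Subgroup G) i := by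
  set f : ℕ → ℕ := fun n => Nat.card (Subgroup.lowerCentralSeries (⊤ : Subgroup G) n) with hf
  obtain ⟨n, hn⟩ : ∃ n, f n = sInf (Set.range f) := Nat.sInf_mem (Set.range_nonempty f)
  have hmin : ∀ m, f n ≤ f m := fun m => hn ▸ Nat.sInf_le ⟨m, rfl⟩
  have hstep : Subgroup.lowerCentralSeries (⊤ : Subgroup G) (n + 1) = Subgroup.lowerCentralSeries (⊤ : Subgroup G) n :=
    eq_of_le_of_card_le (Subgroup.lowerCentralSeries_antitone _ (Nat.le_succ n)) (hmin (n + 1))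
  have hall : ∀ k, Subgroup.lowerCentralSeries (⊤ : Subgroup G) (n + k) = Subgroup.lowerCentralSeries (⊤ : Subgroup G) n := by
    intro k
    induction k with
    | zero => rfl
    | succ k ih =>
      have h1 : Subgroup.lowerCentralSeries (⊤ : Subgroup G) (n + (k + 1)) = ⁅Subgroup.lowerCentralSeries (⊤ : Subgroup G) (n + k), ⊤⁆ := rfl
      have h2 : Subgroup.lowerCentralSeries (⊤ : Subgroup G) (n + 1) = ⁅Subgroup.lowerCentralSeries (⊤ : Subgroup G) n, ⊤⁆ := rfl
      rw [h1, ih, ← h2, hstep]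
  have hL : (⨅ i, Subgroup.lowerCentralSeries (⊤ : Subgroup G) i) = Subgroup.lowerCentralSeries (⊤ : Subgroup G) n := by
    apply le_antisymm (iInf_le _ n)
    refine le_iInf fun m => ?_
    rcases le_total m n with hmn | hnm
    · exact Subgroup.lowerCentralSeries_antitone _ hmn
    · obtain ⟨k, rfl⟩ := Nat.exists_eq_add_of_le hnm
      rw [hall k]
  refine ⟨n, hL.symm, ?_⟩
  rw [hL]
  have h2 : Subgroup.lowerCentralSeries (⊤ : Subgroup G) (n + 1) = ⁅Subgroup.lowerCentralSeries (⊤ : Subgroup G) n, ⊤⁆ := rfl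
  rw [← h2, hstep]

lemma primary_split [Finite G] (x : G) (p : ℕ) (hp : p.Prime) :
    ∃ a b : ℕ, x = x ^ a * x ^ b ∧ (∃ k : ℕ, (x ^ a) ^ p ^ k = 1) ∧
      ¬ p ∣ orderOf (x ^ b) := by
  have hn0 : orderOf x ≠ 0 := (orderOf_pos x).ne'
  have hcop : Nat.Coprime (p ^ (orderOf x).factorization p)
      ((orderOf x) / p ^ (orderOf x).factorization p) :=
    Nat.Coprime.pow_left _ (Nat.coprime_ordCompl hp hn0)
  have hnm : p ^ (orderOf x).factorization p *
      ((orderOf x) / p ^ (orderOf x).factorization p) = orderOf x :=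
    Nat.ordProj_mul_ordCompl_eq_self (orderOf x) p
  obtain ⟨c, hc0, hc1⟩ := Nat.chineseRemainder hcop 0 1
  obtain ⟨d, hd1, hd0⟩ := Nat.chineseRemainder hcop 1 0
  refine ⟨d, c, ?_, ⟨(orderOf x).factorization p, ?_⟩, ?_⟩
  · have hmod : d + c ≡ 1 [MOD orderOf x] := by
      rw [← hnm]
      exact (Nat.modEq_and_modEq_iff_modEq_mul hcop).mp
        ⟨by simpa using Nat.ModEq.add hd1 hc0, by simpa using Nat.ModEq.add hd0 hc1⟩
    calc x = x ^ 1 := (pow_one x).symm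
    _ = x ^ (d + c) := (pow_eq_pow_iff_modEq.mpr hmod).symm
    _ = x ^ d * x ^ c := pow_add x d c
  · rw [← pow_mul]
    apply orderOf_dvd_iff_pow_eq_one.mp
    have hmd : (orderOf x) / p ^ (orderOf x).factorization p ∣ d :=
      Nat.modEq_zero_iff_dvd.mp hd0
    calc orderOf x = p ^ (orderOf x).factorization p *
        ((orderOf x) / p ^ (orderOf x).factorization p) := hnm.symm
    _ ∣ p ^ (orderOf x).factorization p * d := mul_dvd_mul_left _ hmd
    _ = d * p ^ (orderOf x).factorization p := mul_comm _ _
  · have hcm : orderOf (x ^ c) ∣ (orderOf x) / p ^ (orderOf x).factorization p := by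
      apply orderOf_dvd_iff_pow_eq_one.mpr
      rw [← pow_mul]
      apply orderOf_dvd_iff_pow_eq_one.mp
      have hpc : p ^ (orderOf x).factorization p ∣ c := Nat.modEq_zero_iff_dvd.mp hc0
      calc orderOf x = p ^ (orderOf x).factorization p *
          ((orderOf x) / p ^ (orderOf x).factorization p) := hnm.symm
      _ ∣ c * ((orderOf x) / p ^ (orderOf x).factorization p) := mul_dvd_mul hpc dvd_rfl
    intro hdvd
    exact Nat.not_dvd_ordCompl hp hn0 (hdvd.trans hcm)

lemma eq_bot_of_commutator_eq_self {p : ℕ} [Fact p.Prime] {X : Type*} [Group X] [Finite X]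
    {P V : Subgroup X} (hP : IsPGroup p P) (hVP : V ≤ P) (hc : ⁅P, V⁆ = V) : V = ⊥ := by
  haveI : Group.IsNilpotent ↥P := hP.isNilpotent
  set V₂ := V.subgroupOf P with hV2
  have hmap : V₂.map P.subtype = V := by
    rw [hV2, Subgroup.subgroupOf_map_subtype, inf_eq_left.mpr hVP]
  have hcomm2 : ⁅(⊤ : Subgroup ↥P), V₂⁆ = V₂ := by
    apply Subgroup.map_injective P.subtype_injective
    rw [Subgroup.map_commutator, hmap, ← MonoidHom.range_eq_map, Subgroup.range_subtype, hc]
  have hle : ∀ n, V₂ ≤ Subgroup.lowerCentralSeries (⊤ : Subgroup ↥P) n := by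
    intro n
    induction n with
    | zero => exact le_top
    | succ n ihn =>
      calc V₂ = ⁅(⊤ : Subgroup ↥P), V₂⁆ := hcomm2.symm
      _ = ⁅V₂, (⊤ : Subgroup ↥P)⁆ := Subgroup.commutator_comm _ _
      _ ≤ ⁅Subgroup.lowerCentralSeries (⊤ : Subgroup ↥P) n, (⊤ : Subgroup ↥P)⁆ := Subgroup.commutator_mono ihn le_rfl
      _ = Subgroup.lowerCentralSeries (⊤ : Subgroup ↥P) (n + 1) := rfl
  obtain ⟨n, hn⟩ := Subgroup.nilpotent_iff_lowerCentralSeries.mp ‹Group.IsNilpotent ↥P›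
  have hbot : V₂ = ⊥ := le_bot_iff.mp (hn ▸ hle n)
  rw [← hmap, hbot, Subgroup.map_bot]

end SysNormAux
namespace SysNormAux

variable {G : Type*} [Group G]

lemma conj_mem_iSup_of_conj {ι : Sort*} (f : ι → Subgroup G) (u : G)
    (h : ∀ i, ∀ g ∈ f i, u * g * u⁻¹ ∈ ⨆ j, f j) :
    ∀ x ∈ ⨆ j, f j, u * x * u⁻¹ ∈ ⨆ j, f j := by
  intro x hx
  refine Subgroup.iSup_induction f (C := fun g => u * g * u⁻¹ ∈ ⨆ j, f j) hx h (by simpa using Subgroup.one_mem (⨆ j, f j)) ?_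
  intro a b hA hB
  have hab : u * (a * b) * u⁻¹ = (u * a * u⁻¹) * (u * b * u⁻¹) := by group
  rw [hab]
  exact mul_mem hA hB

lemma coe_mul_comm_of_commute {A B : Subgroup G}
    (h : ∀ a ∈ A, ∀ b ∈ B, Commute a b) :
    (A : Set G) * B = (B : Set G) * A := by
  ext x
  simp only [Set.mem_mul]
  constructor
  · rintro ⟨a, ha, b, hb, rfl⟩
    exact ⟨b, hb, a, ha, ((h a ha b hb).eq).symm⟩
  · rintro ⟨b, hb, a, ha, rfl⟩
    exact ⟨a, ha, b, hb, (h a ha b hb).eq⟩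

lemma card_map_mk' [Finite G] (N K : Subgroup G) [N.Normal] :
    Nat.card K = Nat.card ↥(K.map (QuotientGroup.mk' N)) * Nat.card ↥(N ⊓ K) := by
  classical
  set f := (QuotientGroup.mk' N).comp K.subtype with hf
  have hrange : f.range = K.map (QuotientGroup.mk' N) := by
    rw [hf, MonoidHom.range_comp, Subgroup.range_subtype]
  have hker : f.ker = N.subgroupOf K := by
    ext y
    simp only [hf, MonoidHom.mem_ker, MonoidHom.comp_apply, Subgroup.coe_subtype,
      Subgroup.mem_subgroupOf, QuotientGroup.mk'_apply]
    exact QuotientGroup.eq_one_iff (y : G)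
  have hcard1 : Nat.card ↥(N.subgroupOf K) = Nat.card ↥(N ⊓ K) := by
    rw [← Subgroup.subgroupOf_map_subtype]
    exact Nat.card_congr
      (Subgroup.equivMapOfInjective _ _ (Subgroup.subtype_injective K)).toEquiv
  have h3 := Subgroup.card_eq_card_quotient_mul_card_subgroup f.ker
  have h4 : Nat.card (↥K ⧸ f.ker) = Nat.card ↥(K.map (QuotientGroup.mk' N)) := by
    rw [← hrange]
    exact Nat.card_congr (QuotientGroup.quotientKerEquivRange f).toEquiv
  rw [h3, h4, hker, hcard1]

lemma basis_sup_card [Finite G] (S : ℕ → Subgroup G) (hS : IsSylowBasis S)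
    (F : Finset ℕ) :
    F ⊆ (Nat.card G).primeFactors →
    (Nat.card ↥(⨆ q ∈ F, S q) = ∏ q ∈ F, q ^ (Nat.card G).factorization q ∧
      ∀ r ∈ (Nat.card G).primeFactors,
        (S r : Set G) * ↑(⨆ q ∈ F, S q) = ↑(⨆ q ∈ F, S q) * (S r : Set G)) := by
  classical
  induction F using Finset.induction_on with
  | empty =>
    intro _
    constructor
    · simp
    · intro r _
      have hb : (⨆ q ∈ (∅ : Finset ℕ), S q) = (⊥ : Subgroup G) := by simp
      rw [hb]
      have hone : ((⊥ : Subgroup G) : Set G) = (1 : Set G) := by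
        ext z; simp [Set.mem_one]
      rw [hone, mul_one, one_mul]
  | @insert a F ha ih =>
    intro hF
    have haf : a ∈ (Nat.card G).primeFactors := hF (Finset.mem_insert_self a F)
    have hF' : F ⊆ (Nat.card G).primeFactors := fun q hq => hF (Finset.mem_insert_of_mem hq)
    obtain ⟨ihcard, ihcomm⟩ := ih hF'
    have hsup : (⨆ q ∈ insert a F, S q) = S a ⊔ ⨆ q ∈ F, S q := Finset.iSup_insert a F _
    have hpa : a.Prime := Nat.prime_of_mem_primeFactors haf
    haveI : Fact a.Prime := ⟨hpa⟩
    have hcardSa : Nat.card ↥(S a) = a ^ (Nat.card G).factorization a :=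
      Sylow.card_eq_multiplicity
        (⟨S a, (hS.1 a haf).1, fun {Q} h1 h2 => (hS.1 a haf).2 Q h1 h2⟩ : Sylow a G)
    have hcomm_aK : (S a : Set G) * ↑(⨆ q ∈ F, S q) = ↑(⨆ q ∈ F, S q) * (S a : Set G) :=
      ihcomm a haf
    have hcop : Nat.Coprime (a ^ (Nat.card G).factorization a)
        (∏ q ∈ F, q ^ (Nat.card G).factorization q) := by
      apply Nat.Coprime.pow_left
      apply Nat.Coprime.prod_right
      intro q hq
      exact Nat.Coprime.pow_right _
        ((Nat.coprime_primes hpa (Nat.prime_of_mem_primeFactors (hF' hq))).mpr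
          (by rintro rfl; exact ha hq))
    have hdisj : S a ⊓ (⨆ q ∈ F, S q) = ⊥ := by
      apply Subgroup.card_eq_one.mp
      have d1 : Nat.card ↥(S a ⊓ ⨆ q ∈ F, S q) ∣ a ^ (Nat.card G).factorization a :=
        hcardSa ▸ Subgroup.card_dvd_of_le inf_le_left
      have d2 : Nat.card ↥(S a ⊓ ⨆ q ∈ F, S q) ∣ ∏ q ∈ F, q ^ (Nat.card G).factorization q :=
        ihcard ▸ Subgroup.card_dvd_of_le inf_le_right
      exact (Nat.Coprime.coprime_dvd_left d1 hcop).eq_one_of_dvd d2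
    constructor
    · rw [hsup, Finset.prod_insert ha, ← hcardSa, ← ihcard]
      exact card_sup_of_mul_comm hcomm_aK hdisj
    · intro r hr
      rw [hsup, sup_carrier_eq_mul hcomm_aK, ← mul_assoc, hS.2 r hr a haf, mul_assoc,
        ihcomm r hr, ← mul_assoc]

end SysNormAux
open SysNormAux in
theorem system_normalizer_disjoint_abelian_residual
    (G : Type*) [Group G] [Finite G] (hsol : IsSolvable G)
    (hab : ∀ x ∈ ⨅ i, Subgroup.lowerCentralSeries (⊤ : Subgroup G) i, ∀ y ∈ ⨅ i, Subgroup.lowerCentralSeries (⊤ : Subgroup G) i,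
      Commute x y)
    (S : ℕ → Subgroup G) (hS : IsSylowBasis S) :
    systemNormalizer S ⊓ (⨅ i, Subgroup.lowerCentralSeries (⊤ : Subgroup G) i) = ⊥ := by
  classical
  obtain ⟨nL, hLn, hLcomm⟩ := SysNormAux.exists_lcs_stab G
  set L : Subgroup G := ⨅ i, Subgroup.lowerCentralSeries (⊤ : Subgroup G) i with hLdef
  haveI hLnormal : L.Normal := hLn ▸ Subgroup.lowerCentralSeries_normal ⊤ nL
  have hab' : ∀ x ∈ L, ∀ y ∈ L, Commute x y := hab
  rw [eq_bot_iff]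
  intro x hx
  obtain ⟨hxT, hxL⟩ := Subgroup.mem_inf.mp hx
  rw [Subgroup.mem_bot]
  by_contra hx1
  have hordx : orderOf x ≠ 1 := fun h => hx1 (orderOf_eq_one_iff.mp h)
  set p : ℕ := (orderOf x).minFac with hpdef
  have hp : p.Prime := Nat.minFac_prime hordx
  haveI : Fact p.Prime := ⟨hp⟩
  have hpdvd : p ∣ orderOf x := Nat.minFac_dvd _
  obtain ⟨a, b, hxab, ⟨kx, hxa⟩, hxb⟩ := SysNormAux.primary_split x p hp
  have htT : x ^ a ∈ systemNormalizer S := pow_mem hxT a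
  have htL : x ^ a ∈ L := pow_mem hxL a
  suffices hts : x ^ a = 1 by
    rw [hts, one_mul] at hxab
    rw [hxab] at hpdvd
    exact hxb hpdvd
  set t : G := x ^ a with htdef
  have hG0 : (Nat.card G) ≠ 0 := Nat.card_pos.ne'
  have hppf : p ∈ (Nat.card G).primeFactors :=
    Nat.mem_primeFactors.mpr ⟨hp, hpdvd.trans (orderOf_dvd_natCard x), hG0⟩
  have hxnorm : ∀ q ∈ (Nat.card G).primeFactors, t ∈ Subgroup.normalizer (S q : Set G) := by
    intro q hq
    have h1 : t ∈ ⨅ r ∈ (Nat.card G).primeFactors, Subgroup.normalizer (S r : Set G) := htT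
    exact Subgroup.mem_iInf.mp (Subgroup.mem_iInf.mp h1 q) hq
  -- the p-torsion part of L
  set V : Subgroup G :=
    { carrier := {g | g ∈ L ∧ ∃ k : ℕ, g ^ p ^ k = 1}
      one_mem' := ⟨L.one_mem, 0, by simp⟩
      mul_mem' := by
        intro g h hg hh
        obtain ⟨hgL, kg, hkg⟩ := hg
        obtain ⟨hhL, kh, hkh⟩ := hh
        refine ⟨L.mul_mem hgL hhL, kg + kh, ?_⟩
        rw [(hab' g hgL h hhL).mul_pow]
        have e1 : g ^ p ^ (kg + kh) = 1 := by
          rw [pow_add, pow_mul, hkg, one_pow]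
        have e2 : h ^ p ^ (kg + kh) = 1 := by
          rw [pow_add, mul_comm (p ^ kg), pow_mul, hkh, one_pow]
        rw [e1, e2, one_mul]
      inv_mem' := by
        intro g hg
        obtain ⟨hgL, kg, hkg⟩ := hg
        exact ⟨L.inv_mem hgL, kg, by rw [inv_pow, hkg, inv_one]⟩ } with hVdef
  -- the p'-torsion part of L
  set V' : Subgroup G :=
    { carrier := {g | g ∈ L ∧ ¬ p ∣ orderOf g}
      one_mem' := ⟨L.one_mem, by rw [orderOf_one]; exact hp.not_dvd_one⟩
      mul_mem' := by
        intro g h hg hh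
        refine ⟨L.mul_mem hg.1 hh.1, fun hd => ?_⟩
        have hlcm := (hab' g hg.1 h hh.1).orderOf_mul_dvd_lcm
        have hdd : p ∣ orderOf g * orderOf h :=
          (hd.trans hlcm).trans (Nat.lcm_dvd_mul _ _)
        rcases hp.dvd_mul.mp hdd with h' | h'
        · exact hg.2 h'
        · exact hh.2 h'
      inv_mem' := by
        intro g hg
        exact ⟨L.inv_mem hg.1, by rw [orderOf_inv]; exact hg.2⟩ } with hV'def
  have hVL : V ≤ L := fun g hg => hg.1
  have hV'L : V' ≤ L := fun g hg => hg.1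
  haveI hVnormal : V.Normal := by
    constructor
    intro n hn g
    obtain ⟨hnL, k, hk⟩ := hn
    refine ⟨hLnormal.conj_mem n hnL g, k, ?_⟩
    rw [SysNormAux.conj_pow_eq, hk]
    simp
  haveI hV'normal : V'.Normal := by
    constructor
    intro n hn g
    refine ⟨hLnormal.conj_mem n hn.1 g, ?_⟩
    have hoeq : orderOf (g * n * g⁻¹) = orderOf n := by
      have h1 := orderOf_injective (MulAut.conj g).toMonoidHom (MulEquiv.injective _) n
      simpa using h1
    rw [hoeq]
    exact hn.2
  have htV : t ∈ V := ⟨htL, kx, hxa⟩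
  have hVV'1 : ∀ g, g ∈ V → g ∈ V' → g = 1 := by
    intro g hgV hgV'
    obtain ⟨-, k, hk⟩ := hgV
    have h1 : orderOf g ∣ p ^ k := orderOf_dvd_iff_pow_eq_one.mpr hk
    have h2 : Nat.Coprime (orderOf g) (p ^ k) :=
      Nat.Coprime.pow_right _ ((hp.coprime_iff_not_dvd.mpr hgV'.2).symm)
    rw [← orderOf_eq_one_iff]
    exact h2.eq_one_of_dvd h1
  have hdecomp : ∀ l ∈ L, ∃ v w : G, v ∈ V ∧ w ∈ V' ∧ l = v * w := by
    intro l hl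
    obtain ⟨a', b', hl', hpa', hpb'⟩ := SysNormAux.primary_split l p hp
    exact ⟨l ^ a', l ^ b', ⟨L.pow_mem hl a', hpa'⟩, ⟨L.pow_mem hl b', hpb'⟩, hl'⟩
  -- commutator helpers
  have hcommL : ∀ (g l : G), l ∈ L → ⁅g, l⁆ ∈ L := by
    intro g l hl
    have hid : ⁅g, l⁆ = (g * l * g⁻¹) * l⁻¹ := by group
    rw [hid]
    exact L.mul_mem (hLnormal.conj_mem l hl g) (L.inv_mem hl)
  have hsplitc : ∀ (g l₁ l₂ : G), l₁ ∈ L → l₂ ∈ L → ⁅g, l₁ * l₂⁆ = ⁅g, l₁⁆ * ⁅g, l₂⁆ := by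
    intro g l₁ l₂ h1 h2
    have hid : ⁅g, l₁ * l₂⁆ = ⁅g, l₁⁆ * (l₁ * ⁅g, l₂⁆ * l₁⁻¹) := by
      simp only [commutatorElement_def]; group
    rw [hid, (hab' l₁ h1 _ (hcommL g l₂ h2)).eq, mul_inv_cancel_right]
  have hpowc : ∀ (g l : G), l ∈ L → ∀ k : ℕ, ⁅g, l ^ k⁆ = ⁅g, l⁆ ^ k := by
    intro g l hl k
    induction k with
    | zero => rw [pow_zero, pow_zero, commutatorElement_one_right]
    | succ k ih =>
      rw [pow_succ, hsplitc g (l ^ k) l (L.pow_mem hl k) hl, ih, pow_succ]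
  have hAleV : ⁅(⊤ : Subgroup G), V⁆ ≤ V := by
    rw [Subgroup.commutator_le]
    intro g _ v hv
    have hid : ⁅g, v⁆ = (g * v * g⁻¹) * v⁻¹ := by group
    rw [hid]
    exact V.mul_mem (hVnormal.conj_mem v hv g) (V.inv_mem hv)
  have hBleV' : ⁅(⊤ : Subgroup G), V'⁆ ≤ V' := by
    rw [Subgroup.commutator_le]
    intro g _ w hw
    refine ⟨hcommL g w hw.1, fun hd => hw.2 (hd.trans ?_)⟩
    apply orderOf_dvd_iff_pow_eq_one.mpr
    rw [← hpowc g w hw.1 (orderOf w), pow_orderOf_eq_one, commutatorElement_one_right]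
  have hVcomm : ⁅(⊤ : Subgroup G), V⁆ = V := by
    refine le_antisymm hAleV ?_
    have hLsub : L ≤ ⁅(⊤ : Subgroup G), V⁆ ⊔ ⁅(⊤ : Subgroup G), V'⁆ := by
      have h1 : L = ⁅L, (⊤ : Subgroup G)⁆ := hLcomm.symm
      nth_rewrite 1 [h1]
      rw [Subgroup.commutator_comm, Subgroup.commutator_le]
      intro g _ l hl
      obtain ⟨v, w, hv, hw, rfl⟩ := hdecomp l hl
      rw [hsplitc g v w (hVL hv) (hV'L hw)]
      exact mul_mem
        (Subgroup.mem_sup_left (Subgroup.commutator_mem_commutator (Subgroup.mem_top g) hv))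
        (Subgroup.mem_sup_right (Subgroup.commutator_mem_commutator (Subgroup.mem_top g) hw))
    intro v hv
    have hABcomm : ∀ a' ∈ ⁅(⊤ : Subgroup G), V⁆, ∀ b' ∈ ⁅(⊤ : Subgroup G), V'⁆, Commute a' b' :=
      fun a' ha' b' hb' => hab' a' (hVL (hAleV ha')) b' (hV'L (hBleV' hb'))
    have hcoe := SysNormAux.sup_carrier_eq_mul_of_commute hABcomm
    have hvAB' : v ∈ ((⁅(⊤ : Subgroup G), V⁆ : Subgroup G) : Set G)
        * ((⁅(⊤ : Subgroup G), V'⁆ : Subgroup G) : Set G) := by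
      rw [← hcoe]
      exact hLsub hv.1
    obtain ⟨a', ha', b', hb', he⟩ := hvAB'
    have he' : a' * b' = v := he
    have hbV : b' ∈ V := by
      have hb'eq : b' = a'⁻¹ * v := by rw [← he']; group
      rw [hb'eq]
      exact V.mul_mem (V.inv_mem (hAleV ha')) hv
    have hb1 : b' = 1 := hVV'1 b' hbV (hBleV' hb')
    rw [hb1, mul_one] at he'
    rw [← he']
    exact ha'
  -- the Hall p'-subgroup from the basis
  set Fp : Finset ℕ := (Nat.card G).primeFactors.erase p with hFpdef
  have hFpsub : Fp ⊆ (Nat.card G).primeFactors := Finset.erase_subset _ _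
  set H : Subgroup G := ⨆ q ∈ Fp, S q with hHdef
  obtain ⟨hHcard, -⟩ := SysNormAux.basis_sup_card S hS Fp hFpsub
  set m : ℕ := ∏ q ∈ Fp, q ^ (Nat.card G).factorization q with hmdef
  have hHm : Nat.card ↥H = m := hHcard
  have hcop_pm : Nat.Coprime p m := by
    apply Nat.Coprime.prod_right
    intro q hq
    have hqp : q.Prime := Nat.prime_of_mem_primeFactors (hFpsub hq)
    exact Nat.Coprime.pow_right _ ((Nat.coprime_primes hp hqp).mpr
      (fun hpq => (Finset.mem_erase.mp hq).1 hpq.symm))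
  have hpm : ¬ p ∣ m := (Nat.Prime.coprime_iff_not_dvd hp).mp hcop_pm
  have hcardG : Nat.card G = p ^ (Nat.card G).factorization p * m := by
    have h1 : ∏ q ∈ (Nat.card G).primeFactors, q ^ (Nat.card G).factorization q
        = Nat.card G := by
      have h2 : ∏ q ∈ (Nat.card G).primeFactors, q ^ (Nat.card G).factorization q
          = (Nat.card G).factorization.prod (· ^ ·) := rfl
      rw [h2, Nat.factorization_prod_pow_eq_self hG0]
    calc Nat.card G
        = ∏ q ∈ (Nat.card G).primeFactors, q ^ (Nat.card G).factorization q := h1.symm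
    _ = p ^ (Nat.card G).factorization p *
          ∏ q ∈ (Nat.card G).primeFactors.erase p, q ^ (Nat.card G).factorization q :=
        (Finset.mul_prod_erase _ _ hppf).symm
    _ = p ^ (Nat.card G).factorization p * m := by rw [hmdef, hFpdef]
  have hmax : ∀ J : Subgroup G, ¬ p ∣ Nat.card J → Nat.card J ∣ m := by
    intro J hJ
    have h1 : Nat.card J ∣ p ^ (Nat.card G).factorization p * m :=
      hcardG ▸ Subgroup.card_subgroup_dvd_card J
    have h2 : Nat.Coprime (Nat.card J) (p ^ (Nat.card G).factorization p) :=
      Nat.Coprime.pow_right _ ((hp.coprime_iff_not_dvd.mpr hJ).symm)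
    exact Nat.Coprime.dvd_of_dvd_mul_left h2 h1
  have hVp : IsPGroup p V := fun g => by
    obtain ⟨k, hk⟩ := g.2.2
    exact ⟨k, Subtype.ext (by push_cast; exact hk)⟩
  obtain ⟨bV, hbV⟩ := IsPGroup.iff_card.mp hVp
  have hV'card : ¬ p ∣ Nat.card V' := by
    intro hd
    letI : Fintype ↥V' := Fintype.ofFinite ↥V'
    rw [Nat.card_eq_fintype_card] at hd
    obtain ⟨g, hg⟩ := exists_prime_orderOf_dvd_card (G := ↥V') p hd
    have hor : orderOf (g : G) = p := by
      rw [← hg]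
      exact orderOf_injective V'.subtype (Subgroup.subtype_injective V') g
    exact g.2.2 (hor ▸ dvd_rfl)
  have hconjH : ∀ u, (∀ q ∈ (Nat.card G).primeFactors, u ∈ Subgroup.normalizer (S q : Set G)) →
      ∀ g ∈ H, u * g * u⁻¹ ∈ H := by
    intro u hu g hg
    refine SysNormAux.conj_mem_iSup_of_conj (fun q => ⨆ (_ : q ∈ Fp), S q) u ?_ g hg
    intro q y hy
    have hy' : y ∈ ⨆ (_ : q ∈ Fp), S q := hy
    by_cases hq : q ∈ Fp
    · rw [iSup_pos hq] at hy'
      have hnorm := hu q (hFpsub hq)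
      have hconj : u * y * u⁻¹ ∈ S q := (Subgroup.mem_normalizer_iff.mp hnorm y).mp hy'
      exact Subgroup.mem_iSup_of_mem q (Subgroup.mem_iSup_of_mem hq hconj)
    · rw [iSup_neg hq] at hy'
      have hy1 : y = 1 := Subgroup.mem_bot.mp hy'
      rw [hy1]
      have he1 : u * 1 * u⁻¹ = 1 := by group
      rw [he1]
      exact Subgroup.one_mem _
  have hV'H : V' ≤ H := by
    have hd := SysNormAux.card_sup_dvd_of_normal H V'
    have hpd : ¬ p ∣ Nat.card ↥(H ⊔ V') := by
      intro hpd
      rcases hp.dvd_mul.mp (hpd.trans hd) with h' | h'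
      · rw [hHm] at h'
        exact hpm h'
      · exact hV'card h'
    have h1 : Nat.card ↥(H ⊔ V') ∣ m := hmax _ hpd
    have hle : Nat.card ↥(H ⊔ V') ≤ Nat.card ↥H := by
      rw [hHm]
      exact Nat.le_of_dvd (by rw [← hHm]; exact Nat.card_pos) h1
    have h2 : H = H ⊔ V' := SysNormAux.eq_of_le_of_card_le le_sup_left hle
    exact le_sup_right.trans h2.ge
  have hHL_V' : ∀ g, g ∈ H → g ∈ L → g ∈ V' := by
    intro g hgH hgL
    refine ⟨hgL, fun hd => hpm ?_⟩
    exact hd.trans (hHm ▸ Subgroup.orderOf_dvd_natCard H hgH)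
  have hLinfH : L ⊓ H = V' :=
    le_antisymm (fun g hg => hHL_V' g hg.2 hg.1) (le_inf hV'L hV'H)
  have hsupVV' : V ⊔ V' = L := by
    apply le_antisymm (sup_le hVL hV'L)
    intro l hl
    obtain ⟨v, w, hv, hw, rfl⟩ := hdecomp l hl
    exact mul_mem (Subgroup.mem_sup_left hv) (Subgroup.mem_sup_right hw)
  have hdisjVV' : V ⊓ V' = ⊥ := by
    rw [eq_bot_iff]
    intro g hg
    rw [Subgroup.mem_bot]
    exact hVV'1 g hg.1 hg.2
  have hcardL : Nat.card ↥L = Nat.card ↥V * Nat.card ↥V' := by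
    rw [← hsupVV']
    exact SysNormAux.card_sup_of_mul_comm
      (SysNormAux.coe_mul_comm_of_commute
        (fun a' ha' b' hb' => hab' a' (hVL ha') b' (hV'L hb'))) hdisjVV'
  -- quotient by L
  have hπs : Function.Surjective (QuotientGroup.mk' L) := QuotientGroup.mk'_surjective L
  have hnilQ : Group.IsNilpotent (G ⧸ L) := by
    have hle : ∀ k : ℕ, Subgroup.lowerCentralSeries (⊤ : Subgroup (G ⧸ L)) k ≤
        Subgroup.map (QuotientGroup.mk' L) (Subgroup.lowerCentralSeries (⊤ : Subgroup G) k) := by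
      intro k
      induction k with
      | zero =>
        rw [Subgroup.lowerCentralSeries_zero, Subgroup.lowerCentralSeries_zero,
          Subgroup.map_top_of_surjective _ hπs]
      | succ k ih =>
        have e1 : Subgroup.lowerCentralSeries (⊤ : Subgroup (G ⧸ L)) (k + 1)
            = ⁅Subgroup.lowerCentralSeries (⊤ : Subgroup (G ⧸ L)) k, ⊤⁆ := rfl
        have e2 : Subgroup.lowerCentralSeries (⊤ : Subgroup G) (k + 1) = ⁅Subgroup.lowerCentralSeries (⊤ : Subgroup G) k, ⊤⁆ := rfl
        rw [e1, e2, Subgroup.map_commutator]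
        exact Subgroup.commutator_mono ih
          (by rw [Subgroup.map_top_of_surjective _ hπs])
    apply Subgroup.nilpotent_iff_lowerCentralSeries.mpr
    refine ⟨nL, le_bot_iff.mp ?_⟩
    have h2 : Subgroup.map (QuotientGroup.mk' L) (Subgroup.lowerCentralSeries (⊤ : Subgroup G) nL) = ⊥ := by
      rw [hLn]
      apply (Subgroup.map_eq_bot_iff _).mpr
      rw [QuotientGroup.ker_mk']
    exact h2 ▸ hle nL
  set Hbar : Subgroup (G ⧸ L) := H.map (QuotientGroup.mk' L) with hHbardef
  set m' : ℕ := Nat.card ↥Hbar with hm'def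
  have hcardH_split : Nat.card ↥H = m' * Nat.card ↥V' := by
    have h1 := SysNormAux.card_map_mk' L H
    rw [hLinfH] at h1
    exact h1
  have hmm' : m = m' * Nat.card ↥V' := by rw [← hHm]; exact hcardH_split
  have hpm' : ¬ p ∣ m' := fun h => hpm (by rw [hmm']; exact h.mul_right _)
  have hbVle : bV ≤ (Nat.card G).factorization p := by
    have h1 : (p : ℕ) ^ bV ∣ p ^ (Nat.card G).factorization p * m := by
      rw [← hbV, ← hcardG]
      exact Subgroup.card_subgroup_dvd_card V
    have h2 : Nat.Coprime (p ^ bV) m := Nat.Coprime.pow_left _ hcop_pm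
    exact (Nat.pow_dvd_pow_iff_le_right hp.one_lt).mp (h2.dvd_of_dvd_mul_right h1)
  have hcardQ1' : Nat.card (G ⧸ L) = p ^ ((Nat.card G).factorization p - bV) * m' := by
    have hVpos : 0 < Nat.card ↥V' := Nat.card_pos
    have hcardQ1 : Nat.card (G ⧸ L) * (Nat.card ↥V * Nat.card ↥V') = Nat.card G := by
      rw [← hcardL]
      exact (Subgroup.card_eq_card_quotient_mul_card_subgroup L).symm
    have hkey2 : Nat.card (G ⧸ L) * p ^ bV = p ^ (Nat.card G).factorization p * m' := by
      apply Nat.eq_of_mul_eq_mul_right hVpos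
      calc Nat.card (G ⧸ L) * p ^ bV * Nat.card ↥V'
          = Nat.card (G ⧸ L) * (Nat.card ↥V * Nat.card ↥V') := by rw [hbV]; ring
      _ = Nat.card G := hcardQ1
      _ = p ^ (Nat.card G).factorization p * m := hcardG
      _ = p ^ (Nat.card G).factorization p * m' * Nat.card ↥V' := by rw [hmm']; ring
    apply Nat.eq_of_mul_eq_mul_right (pow_pos hp.pos bV)
    calc Nat.card (G ⧸ L) * p ^ bV = p ^ (Nat.card G).factorization p * m' := hkey2
    _ = p ^ bV * p ^ ((Nat.card G).factorization p - bV) * m' := by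
        rw [← pow_add, Nat.add_sub_cancel' hbVle]
    _ = p ^ ((Nat.card G).factorization p - bV) * m' * p ^ bV := by ring
  have hmax' : ∀ J : Subgroup (G ⧸ L), ¬ p ∣ Nat.card J → Nat.card J ∣ m' := by
    intro J hJ
    have h1 : Nat.card J ∣ p ^ ((Nat.card G).factorization p - bV) * m' :=
      hcardQ1' ▸ Subgroup.card_subgroup_dvd_card J
    have h2 : Nat.Coprime (Nat.card J) (p ^ ((Nat.card G).factorization p - bV)) :=
      Nat.Coprime.pow_right _ ((hp.coprime_iff_not_dvd.mpr hJ).symm)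
    exact Nat.Coprime.dvd_of_dvd_mul_left h2 h1
  set Fbar : Finset ℕ := (Nat.card (G ⧸ L)).primeFactors.erase p with hFbardef
  have hQex : ∀ q ∈ Fbar, ∃ Qq : Subgroup (G ⧸ L), Qq.Normal ∧
      Nat.card ↥Qq = q ^ (Nat.card (G ⧸ L)).factorization q := by
    intro q hq
    have hqprime : q.Prime := Nat.prime_of_mem_primeFactors (Finset.mem_of_mem_erase hq)
    haveI : Fact q.Prime := ⟨hqprime⟩
    obtain ⟨Q⟩ : Nonempty (Sylow q (G ⧸ L)) := inferInstance
    refine ⟨Q, ?_, Sylow.card_eq_multiplicity Q⟩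
    have htfae := (@isNilpotent_of_finite_tfae (G ⧸ L) _ _).out 0 3
    exact htfae.mp hnilQ q ⟨hqprime⟩ Q
  choose! Qb hQbn hQbc using hQex
  have hQbH : ∀ q ∈ Fbar, Qb q ≤ Hbar := by
    intro q hq
    haveI := hQbn q hq
    have hd := SysNormAux.card_sup_dvd_of_normal Hbar (Qb q)
    have hqne : q ≠ p := (Finset.mem_erase.mp hq).1
    have hqprime : q.Prime := Nat.prime_of_mem_primeFactors (Finset.mem_of_mem_erase hq)
    have hpq : ¬ p ∣ Nat.card ↥(Qb q) := by
      rw [hQbc q hq]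
      intro hdd
      exact hqne ((Nat.prime_dvd_prime_iff_eq hp hqprime).mp (hp.dvd_of_dvd_pow hdd)).symm
    have hps : ¬ p ∣ Nat.card ↥(Hbar ⊔ Qb q) := by
      intro hdd
      rcases hp.dvd_mul.mp (hdd.trans hd) with h' | h'
      · exact hpm' h'
      · exact hpq h'
    have h1 : Nat.card ↥(Hbar ⊔ Qb q) ∣ m' := hmax' _ hps
    have h2 : Hbar = Hbar ⊔ Qb q := SysNormAux.eq_of_le_of_card_le le_sup_left
      ((Nat.le_of_dvd Nat.card_pos h1).trans (le_of_eq hm'def.symm))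
    exact le_sup_right.trans h2.ge
  set Kbar : Subgroup (G ⧸ L) := ⨆ q ∈ Fbar, Qb q with hKbardef
  have hKbarH : Kbar ≤ Hbar := iSup_le fun q => iSup_le fun hq => hQbH q hq
  set mpp : ℕ := ∏ q ∈ Fbar, q ^ (Nat.card (G ⧸ L)).factorization q with hmppdef
  have hQ0 : (Nat.card (G ⧸ L)) ≠ 0 := Nat.card_pos.ne'
  have hprodQfull : ∏ q ∈ (Nat.card (G ⧸ L)).primeFactors,
      q ^ (Nat.card (G ⧸ L)).factorization q = Nat.card (G ⧸ L) := by
    have h2 : ∏ q ∈ (Nat.card (G ⧸ L)).primeFactors, q ^ (Nat.card (G ⧸ L)).factorization q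
        = (Nat.card (G ⧸ L)).factorization.prod (· ^ ·) := rfl
    rw [h2, Nat.factorization_prod_pow_eq_self hQ0]
  have hcardQ1'' : Nat.card (G ⧸ L)
      = p ^ (Nat.card (G ⧸ L)).factorization p * mpp := by
    by_cases hpQ : p ∈ (Nat.card (G ⧸ L)).primeFactors
    · calc Nat.card (G ⧸ L)
          = ∏ q ∈ (Nat.card (G ⧸ L)).primeFactors,
              q ^ (Nat.card (G ⧸ L)).factorization q := hprodQfull.symm
      _ = p ^ (Nat.card (G ⧸ L)).factorization p *
            ∏ q ∈ (Nat.card (G ⧸ L)).primeFactors.erase p,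
              q ^ (Nat.card (G ⧸ L)).factorization q :=
          (Finset.mul_prod_erase _ _ hpQ).symm
      _ = p ^ (Nat.card (G ⧸ L)).factorization p * mpp := by rw [hmppdef, hFbardef]
    · have h0 : (Nat.card (G ⧸ L)).factorization p = 0 :=
        Finsupp.notMem_support_iff.mp (by rwa [Nat.support_factorization])
      rw [h0, pow_zero, one_mul, hmppdef, hFbardef, Finset.erase_eq_of_notMem hpQ,
        hprodQfull]
  have hpmpp : ¬ p ∣ mpp := by
    have hcop2 : Nat.Coprime p mpp := by
      apply Nat.Coprime.prod_right
      intro q hq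
      have hqp : q.Prime := Nat.prime_of_mem_primeFactors (Finset.mem_of_mem_erase hq)
      exact Nat.Coprime.pow_right _ ((Nat.coprime_primes hp hqp).mpr
        (fun hpq => (Finset.mem_erase.mp hq).1 hpq.symm))
    exact (Nat.Prime.coprime_iff_not_dvd hp).mp hcop2
  have hm'eq : m' = mpp := by
    have heq : p ^ ((Nat.card G).factorization p - bV) * m'
        = p ^ (Nat.card (G ⧸ L)).factorization p * mpp := by
      rw [← hcardQ1', ← hcardQ1'']
    have d1 : m' ∣ mpp := by
      have h1 : m' ∣ p ^ (Nat.card (G ⧸ L)).factorization p * mpp := by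
        rw [← heq]
        exact Dvd.intro_left _ rfl
      have h2 : Nat.Coprime m' (p ^ (Nat.card (G ⧸ L)).factorization p) :=
        Nat.Coprime.pow_right _ ((hp.coprime_iff_not_dvd.mpr hpm').symm)
      exact Nat.Coprime.dvd_of_dvd_mul_left h2 h1
    have d2 : mpp ∣ m' := by
      have h1 : mpp ∣ p ^ ((Nat.card G).factorization p - bV) * m' := by
        rw [heq]
        exact Dvd.intro_left _ rfl
      have h2 : Nat.Coprime mpp (p ^ ((Nat.card G).factorization p - bV)) :=
        Nat.Coprime.pow_right _ ((hp.coprime_iff_not_dvd.mpr hpmpp).symm)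
      exact Nat.Coprime.dvd_of_dvd_mul_left h2 h1
    exact Nat.dvd_antisymm d1 d2
  have hKbar_card : m' ∣ Nat.card ↥Kbar := by
    rw [hm'eq, hmppdef]
    apply SysNormAux.prod_pow_dvd
    · intro q hq
      exact Nat.prime_of_mem_primeFactors (Finset.mem_of_mem_erase hq)
    · intro q hq
      have hle : Qb q ≤ Kbar := le_iSup₂ (f := fun q (_ : q ∈ Fbar) => Qb q) q hq
      exact (hQbc q hq) ▸ Subgroup.card_dvd_of_le hle
  have hHbarKbar : Hbar = Kbar := by
    refine (SysNormAux.eq_of_le_of_card_le hKbarH ?_).symm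
    calc Nat.card ↥Hbar = m' := hm'def.symm
    _ ≤ Nat.card ↥Kbar := Nat.le_of_dvd Nat.card_pos hKbar_card
  haveI hKbarN : Kbar.Normal := by
    constructor
    intro n hn g
    refine SysNormAux.conj_mem_iSup_of_conj (fun q => ⨆ (_ : q ∈ Fbar), Qb q) g ?_ n hn
    intro q y hy
    have hy' : y ∈ ⨆ (_ : q ∈ Fbar), Qb q := hy
    by_cases hq : q ∈ Fbar
    · rw [iSup_pos hq] at hy'
      have hc := (hQbn q hq).conj_mem y hy' g
      exact Subgroup.mem_iSup_of_mem q (Subgroup.mem_iSup_of_mem hq hc)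
    · rw [iSup_neg hq] at hy'
      have hy1 : y = 1 := Subgroup.mem_bot.mp hy'
      rw [hy1]
      have he1 : g * 1 * g⁻¹ = 1 := by group
      rw [he1]
      exact Subgroup.one_mem _
  haveI hHbarN : Hbar.Normal := hHbarKbar ▸ hKbarN
  have hHsupL : Subgroup.comap (QuotientGroup.mk' L) Hbar = H ⊔ L := by
    rw [hHbardef, Subgroup.comap_map_eq, QuotientGroup.ker_mk']
  haveI hHLnormal : (H ⊔ L).Normal := by
    rw [← hHsupL]
    exact Subgroup.Normal.comap hHbarN _
  -- W and the second quotient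
  set W : Subgroup G := ⁅V, H ⊔ L⁆ with hWdef
  haveI hWnormal : W.Normal := Subgroup.commutator_normal V (H ⊔ L)
  have hWVH : W = ⁅V, H⁆ := by
    apply le_antisymm
    · rw [hWdef, Subgroup.commutator_le]
      intro v hv z hz
      have hz' : z ∈ (H : Set G) * (L : Set G) := by
        rw [← Subgroup.mul_normal H L]
        exact hz
      obtain ⟨h, hh, l, hl, hhl⟩ := hz'
      have hhl' : h * l = z := hhl
      subst hhl'
      have hcl : Commute v l := hab' v (hVL hv) l hl
      have h1 : l * v⁻¹ = v⁻¹ * l := (hcl.inv_left.eq).symm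
      have hkey : ⁅v, h * l⁆ = ⁅v, h⁆ := by
        calc ⁅v, h * l⁆ = v * h * (l * v⁻¹) * l⁻¹ * h⁻¹ := by
              simp only [commutatorElement_def]; group
        _ = v * h * (v⁻¹ * l) * l⁻¹ * h⁻¹ := by rw [h1]
        _ = ⁅v, h⁆ := by simp only [commutatorElement_def]; group
      rw [hkey]
      exact Subgroup.commutator_mem_commutator hv hh
    · exact Subgroup.commutator_mono le_rfl le_sup_left
  have hWV : W ≤ V := by
    rw [hWVH, Subgroup.commutator_le]
    intro v hv h hh
    have hid : ⁅v, h⁆ = v * (h * v⁻¹ * h⁻¹) := by group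
    rw [hid]
    exact V.mul_mem hv (hVnormal.conj_mem _ (V.inv_mem hv) h)
  have hπ2s : Function.Surjective (QuotientGroup.mk' W) := QuotientGroup.mk'_surjective W
  set Vbar : Subgroup (G ⧸ W) := V.map (QuotientGroup.mk' W) with hVbardef
  set Mbar : Subgroup (G ⧸ W) := (H ⊔ L).map (QuotientGroup.mk' W) with hMbardef
  haveI hVbarN : Vbar.Normal := hVnormal.map _ hπ2s
  haveI hMbarN : Mbar.Normal := hHLnormal.map _ hπ2s
  have hcent : ∀ z ∈ Mbar, ∀ v ∈ Vbar, z * v = v * z := by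
    intro z hz v hv
    obtain ⟨z0, hz0, rfl⟩ := hz
    obtain ⟨v0, hv0, rfl⟩ := hv
    have h0 := Subgroup.commutator_mem_commutator hz0 hv0
    rw [Subgroup.commutator_comm] at h0
    have h3 : ⁅(QuotientGroup.mk' W) z0, (QuotientGroup.mk' W) v0⁆ = 1 := by
      rw [← map_commutatorElement]
      exact (QuotientGroup.eq_one_iff _).mpr h0
    exact (commutatorElement_eq_one_iff_commute.mp h3).eq
  have htopbar : ⁅(⊤ : Subgroup (G ⧸ W)), Vbar⁆ = Vbar := by
    have h1 := congrArg (Subgroup.map (QuotientGroup.mk' W)) hVcomm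
    rwa [Subgroup.map_commutator, Subgroup.map_top_of_surjective _ hπ2s] at h1
  have hVbarP : IsPGroup p ↥Vbar := hVp.map _
  obtain ⟨P₁, hVP₁⟩ := hVbarP.exists_le_sylow
  have hMtop : Mbar ⊔ (P₁ : Subgroup (G ⧸ W)) = ⊤ := by
    have hcom : Subgroup.comap (QuotientGroup.mk' W) Mbar = H ⊔ L := by
      rw [hMbardef, Subgroup.comap_map_eq, QuotientGroup.ker_mk']
      exact sup_eq_left.mpr (hWV.trans (hVL.trans le_sup_right))
    have hieq : Mbar.index = (H ⊔ L).index := by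
      rw [← hcom]
      exact (Subgroup.index_comap_of_surjective Mbar hπ2s).symm
    have hcardHL : Nat.card ↥(H ⊔ L) = m' * Nat.card ↥L := by
      have h1 := SysNormAux.card_map_mk' L (H ⊔ L)
      have h2 : (H ⊔ L).map (QuotientGroup.mk' L) = Hbar := by
        rw [Subgroup.map_sup, hHbardef]
        have h3 : L.map (QuotientGroup.mk' L) = ⊥ := by
          apply (Subgroup.map_eq_bot_iff _).mpr
          rw [QuotientGroup.ker_mk']
        rw [h3, sup_bot_eq]
      have h4 : L ⊓ (H ⊔ L) = L := inf_eq_left.mpr le_sup_right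
      rw [h2, h4] at h1
      exact h1
    have h5 : (H ⊔ L).index * p ^ bV = p ^ (Nat.card G).factorization p := by
      have hc0 : 0 < Nat.card ↥V' := Nat.card_pos
      have hm'0 : 0 < m' := by rw [hm'def]; exact Nat.card_pos
      have h6 := Subgroup.card_mul_index (H ⊔ L)
      rw [hcardHL, hcardL, hbV, hcardG, hmm'] at h6
      apply Nat.eq_of_mul_eq_mul_left (Nat.mul_pos hm'0 hc0)
      calc m' * Nat.card ↥V' * ((H ⊔ L).index * p ^ bV)
          = m' * (p ^ bV * Nat.card ↥V') * (H ⊔ L).index := by ring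
      _ = p ^ (Nat.card G).factorization p * (m' * Nat.card ↥V') := h6
      _ = m' * Nat.card ↥V' * p ^ (Nat.card G).factorization p := by ring
    have hMin : Mbar.index ∣ p ^ (Nat.card G).factorization p := by
      rw [hieq]
      exact ⟨p ^ bV, h5.symm⟩
    have hi1 : (Mbar ⊔ (P₁ : Subgroup (G ⧸ W))).index ∣ Mbar.index :=
      Subgroup.index_dvd_of_le le_sup_left
    have hi2 : (Mbar ⊔ (P₁ : Subgroup (G ⧸ W))).index ∣ (P₁ : Subgroup (G ⧸ W)).index :=
      Subgroup.index_dvd_of_le le_sup_right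
    have hPi : ¬ p ∣ (P₁ : Subgroup (G ⧸ W)).index := P₁.not_dvd_index
    have he : (Mbar ⊔ (P₁ : Subgroup (G ⧸ W))).index ∣ p ^ (Nat.card G).factorization p :=
      hi1.trans hMin
    obtain ⟨j, hjle, hj⟩ := (Nat.dvd_prime_pow hp).mp he
    rcases Nat.eq_zero_or_pos j with hj0 | hjpos
    · rw [hj0, pow_zero] at hj
      exact Subgroup.index_eq_one.mp hj
    · exfalso
      apply hPi
      refine dvd_trans ?_ hi2
      rw [hj]
      exact dvd_pow_self p hjpos.ne'
  have hprodQ2 : ∀ g : G ⧸ W, ∃ z ∈ Mbar, ∃ s ∈ (P₁ : Subgroup (G ⧸ W)), g = z * s := by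
    intro g
    have hg : g ∈ (Mbar : Set (G ⧸ W)) * ((P₁ : Subgroup (G ⧸ W)) : Set (G ⧸ W)) := by
      rw [← Subgroup.normal_mul, hMtop]
      trivial
    obtain ⟨z, hz, s, hs, he⟩ := hg
    have he' : z * s = g := he
    exact ⟨z, hz, s, hs, he'.symm⟩
  have hP₁V : ⁅((P₁ : Subgroup (G ⧸ W))), Vbar⁆ = Vbar := by
    apply le_antisymm
    · calc ⁅(P₁ : Subgroup (G ⧸ W)), Vbar⁆ ≤ ⁅(⊤ : Subgroup (G ⧸ W)), Vbar⁆ :=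
        Subgroup.commutator_mono le_top le_rfl
      _ = Vbar := htopbar
    · conv_lhs => rw [← htopbar]
      rw [Subgroup.commutator_le]
      intro g _ v hv
      obtain ⟨z, hz, s, hs, rfl⟩ := hprodQ2 g
      have hsv : s * v * s⁻¹ ∈ Vbar := hVbarN.conj_mem v hv s
      have h1 : z * (s * v * s⁻¹) = (s * v * s⁻¹) * z := hcent z hz _ hsv
      have hkey : ⁅z * s, v⁆ = ⁅s, v⁆ := by
        calc ⁅z * s, v⁆ = z * (s * v * s⁻¹) * z⁻¹ * v⁻¹ := by
              simp only [commutatorElement_def]; group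
        _ = (s * v * s⁻¹) * z * z⁻¹ * v⁻¹ := by rw [h1]
        _ = ⁅s, v⁆ := by simp only [commutatorElement_def]; group
      rw [hkey]
      exact Subgroup.commutator_mem_commutator hs hv
  have hVbarbot : Vbar = ⊥ :=
    SysNormAux.eq_bot_of_commutator_eq_self P₁.isPGroup' hVP₁ hP₁V
  have hVleW : V ≤ W := by
    have h1 := (Subgroup.map_eq_bot_iff V).mp hVbarbot
    rwa [QuotientGroup.ker_mk'] at h1
  have hVcommH : V ≤ ⁅V, H⁆ := hWVH ▸ hVleW
  -- t commutes with every element of H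
  have htH : ∀ h : G, h ∈ H → h * t * h⁻¹ = t := by
    intro h hh
    have hc1 : t * h * t⁻¹ ∈ H := hconjH t hxnorm h hh
    have hcV : ⁅t, h⁆ ∈ V := by
      have hid : ⁅t, h⁆ = t * (h * t⁻¹ * h⁻¹) := by group
      rw [hid]
      exact V.mul_mem htV (hVnormal.conj_mem _ (V.inv_mem htV) h)
    have hcH : ⁅t, h⁆ ∈ H := by
      have hid : ⁅t, h⁆ = (t * h * t⁻¹) * h⁻¹ := by group
      rw [hid]
      exact H.mul_mem hc1 (H.inv_mem hh)
    have hc1' : ⁅t, h⁆ = 1 := by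
      obtain ⟨-, k, hk⟩ := hcV
      have h1 : orderOf ⁅t, h⁆ ∣ p ^ k := orderOf_dvd_iff_pow_eq_one.mpr hk
      have h2 : orderOf ⁅t, h⁆ ∣ m := hHm ▸ Subgroup.orderOf_dvd_natCard H hcH
      have h3 : Nat.Coprime (orderOf ⁅t, h⁆) m :=
        Nat.Coprime.coprime_dvd_left h1 (Nat.Coprime.pow_left _ hcop_pm)
      rw [← orderOf_eq_one_iff]
      exact h3.eq_one_of_dvd h2
    have hco := commutatorElement_eq_one_iff_commute.mp hc1'
    calc h * t * h⁻¹ = t * h * h⁻¹ := by rw [← hco.eq]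
    _ = t := by group
  -- the averaging map
  letI fintH : Fintype ↥H := Fintype.ofFinite ↥H
  letI commV : CommGroup ↥V :=
    { (inferInstance : Group ↥V) with
      mul_comm := fun a b => Subtype.ext ((hab' a (hVL a.2) b (hVL b.2)).eq) }
  set θ : ↥V → ↥V := fun v => ∏ h : ↥H, ⟨(h : G) * (v : G) * (h : G)⁻¹,
    hVnormal.conj_mem _ v.2 _⟩ with hθdef
  have hθmul : ∀ v w : ↥V, θ (v * w) = θ v * θ w := by
    intro v w
    rw [hθdef]
    simp only
    rw [← Finset.prod_mul_distrib]
    apply Finset.prod_congr rfl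
    intro h _
    apply Subtype.ext
    simp only [Subgroup.coe_mul]
    group
  have hθ1 : θ 1 = 1 := by
    have h := hθmul 1 1
    rw [mul_one] at h
    exact (left_eq_mul.mp h)
  have hθinv : ∀ v : ↥V, θ v⁻¹ = (θ v)⁻¹ := by
    intro v
    have h := hθmul v v⁻¹
    rw [mul_inv_cancel, hθ1] at h
    exact (eq_inv_of_mul_eq_one_right h.symm)
  have hθconj : ∀ (v : ↥V) (h0 : ↥H),
      θ ⟨(h0 : G) * (v : G) * (h0 : G)⁻¹, hVnormal.conj_mem _ v.2 _⟩ = θ v := by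
    intro v h0
    rw [hθdef]
    simp only
    apply Fintype.prod_equiv (Equiv.mulRight h0)
    intro h
    apply Subtype.ext
    simp only [Equiv.coe_mulRight, Subgroup.coe_mul]
    group
  set K : Subgroup G :=
    { carrier := {g | ∃ hg : g ∈ V, θ ⟨g, hg⟩ = 1}
      one_mem' := ⟨V.one_mem, hθ1⟩
      mul_mem' := by
        intro g h hg hh
        obtain ⟨hgV, hgθ⟩ := hg
        obtain ⟨hhV, hhθ⟩ := hh
        refine ⟨V.mul_mem hgV hhV, ?_⟩
        have hsub : (⟨g * h, V.mul_mem hgV hhV⟩ : ↥V) = ⟨g, hgV⟩ * ⟨h, hhV⟩ :=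
          Subtype.ext rfl
        rw [hsub, hθmul, hgθ, hhθ, one_mul]
      inv_mem' := by
        intro g hg
        obtain ⟨hgV, hgθ⟩ := hg
        refine ⟨V.inv_mem hgV, ?_⟩
        have hsub : (⟨g⁻¹, V.inv_mem hgV⟩ : ↥V) = (⟨g, hgV⟩ : ↥V)⁻¹ := Subtype.ext rfl
        rw [hsub, hθinv, hgθ, inv_one] } with hKdef
  have hVHK : ⁅V, H⁆ ≤ K := by
    rw [Subgroup.commutator_le]
    intro v hv h hh
    have hmemV : ⁅v, h⁆ ∈ V := by
      have hid : ⁅v, h⁆ = v * (h * v⁻¹ * h⁻¹) := by group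
      rw [hid]
      exact V.mul_mem hv (hVnormal.conj_mem _ (V.inv_mem hv) h)
    refine ⟨hmemV, ?_⟩
    have hsplit' : (⟨⁅v, h⁆, hmemV⟩ : ↥V)
        = ⟨v, hv⟩ * ⟨h * v⁻¹ * h⁻¹, hVnormal.conj_mem _ (V.inv_mem hv) h⟩ := by
      apply Subtype.ext
      show ⁅v, h⁆ = v * (h * v⁻¹ * h⁻¹)
      group
    rw [hsplit', hθmul]
    have h1 := hθconj (⟨v, hv⟩ : ↥V)⁻¹ ⟨h, hh⟩
    have h2 : (⟨h * v⁻¹ * h⁻¹, hVnormal.conj_mem _ (V.inv_mem hv) h⟩ : ↥V)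
        = ⟨((⟨h, hh⟩ : ↥H) : G) * (((⟨v, hv⟩ : ↥V)⁻¹ : ↥V) : G) * ((⟨h, hh⟩ : ↥H) : G)⁻¹,
          hVnormal.conj_mem _ ((⟨v, hv⟩ : ↥V)⁻¹).2 _⟩ := Subtype.ext rfl
    rw [h2, h1, hθinv, mul_inv_cancel]
  have htK : t ∈ K := hVHK (hVcommH htV)
  obtain ⟨htV2, hθt1⟩ := htK
  have hθt : θ ⟨t, htV2⟩ = ⟨t, htV2⟩ ^ Fintype.card ↥H := by
    rw [hθdef]
    simp only
    calc (∏ h : ↥H, (⟨(h : G) * t * (h : G)⁻¹, hVnormal.conj_mem _ htV2 _⟩ : ↥V))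
        = ∏ _h : ↥H, (⟨t, htV2⟩ : ↥V) :=
          Finset.prod_congr rfl (fun h _ => Subtype.ext (htH (h : G) h.2))
    _ = (⟨t, htV2⟩ : ↥V) ^ Fintype.card ↥H := by
        rw [Finset.prod_const, Finset.card_univ]
  have hpow : (⟨t, htV2⟩ : ↥V) ^ Fintype.card ↥H = 1 := by
    rw [← hθt]
    exact hθt1
  have hpowG : t ^ Fintype.card ↥H = 1 := by
    have h1 := congrArg (Subtype.val) hpow
    simpa using h1
  have hdvd1 : orderOf t ∣ m := by
    rw [← hHm, Nat.card_eq_fintype_card]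
    exact orderOf_dvd_iff_pow_eq_one.mpr hpowG
  have hdvd2 : orderOf t ∣ p ^ kx := orderOf_dvd_iff_pow_eq_one.mpr hxa
  have hord1 : orderOf t = 1 :=
    (Nat.Coprime.coprime_dvd_left hdvd2 (Nat.Coprime.pow_left _ hcop_pm)).eq_one_of_dvd hdvd1
  exact orderOf_eq_one_iff.mp hord1
end
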